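/- Let S and S' be antichain covers of Fin p such that S' is a parent of S and no member of S' is a strict subset of a member of S. Then S ⊆ S' and S' = S ∪ {c} for some c that is maximal independent of S. -/
import Mathlib


/-- `X` covers `Fin p`. -/
def Covers {p : ℕ} (X : Finset (Finset (Fin p))) : Prop :=
  ∀ i : Fin p, ∃ σ ∈ X, i ∈ σ

/-- `S` is an antichain cover of `Fin p`. -/
def AntichainCover {p : ℕ} (S : Finset (Finset (Fin p))) : Prop :=
  IsAntichain (· ⊆ ·) (S : Set (Finset (Fin p))) ∧ Covers S

/-- `S ⪯ S'` : for every `σ ∈ S` there exists `σ' ∈ S'` with `σ' ⊆ σ`. -/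
def Preceq {p : ℕ} (S S' : Finset (Finset (Fin p))) : Prop :=
  ∀ σ ∈ S, ∃ σ' ∈ S', σ' ⊆ σ

/-- `S'` is a parent of `S` in the poset of antichain covers of `Fin p` ordered by `⪯`. -/
def Parent {p : ℕ} (S S' : Finset (Finset (Fin p))) : Prop :=
  Preceq S S' ∧ S ≠ S' ∧
    ¬ ∃ S'' : Finset (Finset (Fin p)),
        AntichainCover S'' ∧ S'' ≠ S ∧ S'' ≠ S' ∧ Preceq S S'' ∧ Preceq S'' S'

/-- `c` is independent of `S`: incomparable with every member of `S`. -/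
def IndependentOf {p : ℕ} (c : Finset (Fin p)) (S : Finset (Finset (Fin p))) : Prop :=
  ∀ σ ∈ S, ¬ σ ⊆ c ∧ ¬ c ⊆ σ

/-- `c` is maximal independent of `S`. -/
def MaxIndependentOf {p : ℕ} (c : Finset (Fin p)) (S : Finset (Finset (Fin p))) : Prop :=
  IndependentOf c S ∧ ∀ d : Finset (Fin p), c ⊂ d → ¬ IndependentOf d S

lemma ac_insert {p : ℕ} {S : Finset (Finset (Fin p))} {c : Finset (Fin p)}
    (hS : AntichainCover S) (hc : IndependentOf c S) : AntichainCover (insert c S) := by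
  constructor
  · rw [Finset.coe_insert]
    refine hS.1.insert ?_ ?_
    · intro b hb _; exact (hc b hb).1
    · intro b hb _; exact (hc b hb).2
  · intro i
    obtain ⟨σ, hσ, hi⟩ := hS.2 i
    exact ⟨σ, Finset.mem_insert_of_mem hσ, hi⟩

lemma ind_not_mem {p : ℕ} {S : Finset (Finset (Fin p))} {c : Finset (Fin p)}
    (hc : IndependentOf c S) : c ∉ S := fun h => (hc c h).2 subset_rfl

theorem parent_no_strict_subset_is_rule1 (p : ℕ) (S S' : Finset (Finset (Fin p)))
    (hS : AntichainCover S) (hS' : AntichainCover S') (hpar : Parent S S')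
    (hno : ¬ ∃ σ' ∈ S', ∃ σ ∈ S, σ' ⊂ σ) :
    S ⊆ S' ∧ ∃ c : Finset (Fin p), MaxIndependentOf c S ∧ S' = insert c S := by
  obtain ⟨hpre, hne, hmin⟩ := hpar
  have hsub : S ⊆ S' := by
    intro σ hσ
    obtain ⟨σ', hσ', hss⟩ := hpre σ hσ
    have heq : σ' = σ := by
      by_contra h
      exact hno ⟨σ', hσ', σ, hσ, ⟨hss, fun h2 => h (subset_antisymm hss h2)⟩⟩
    exact heq ▸ hσ'
  obtain ⟨c, hcS', hcS⟩ : ∃ c ∈ S', c ∉ S := by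
    by_contra h
    push_neg at h
    exact hne (Finset.Subset.antisymm hsub h)
  have hcind : IndependentOf c S := by
    intro σ hσ
    have hσ' : σ ∈ S' := hsub hσ
    have hne' : σ ≠ c := fun h => hcS (h ▸ hσ)
    exact ⟨hS'.1 hσ' hcS' hne', hS'.1 hcS' hσ' (Ne.symm hne')⟩
  have hS'eq : S' = insert c S := by
    apply Finset.Subset.antisymm
    · intro x hx
      by_cases hxS : x ∈ S
      · exact Finset.mem_insert_of_mem hxS
      · rw [Finset.mem_insert]
        left
        by_contra hxc
        apply hmin
        refine ⟨insert c S, ac_insert hS hcind, ?_, ?_, ?_, ?_⟩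
        · intro h
          exact hcS (h ▸ Finset.mem_insert_self c S)
        · intro h
          have : x ∈ insert c S := h ▸ hx
          rcases Finset.mem_insert.1 this with h1 | h1
          · exact hxc h1
          · exact hxS h1
        · intro σ hσ; exact ⟨σ, Finset.mem_insert_of_mem hσ, subset_rfl⟩
        · intro σ hσ
          rcases Finset.mem_insert.1 hσ with h1 | h1
          · exact ⟨c, hcS', h1 ▸ subset_rfl⟩
          · exact ⟨σ, hsub h1, subset_rfl⟩
    · intro x hx
      rcases Finset.mem_insert.1 hx with h1 | h1
      · exact h1 ▸ hcS'
      · exact hsub h1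
  refine ⟨hsub, c, ⟨hcind, ?_⟩, hS'eq⟩
  intro d hcd hdind
  apply hmin
  refine ⟨insert d S, ac_insert hS hdind, ?_, ?_, ?_, ?_⟩
  · intro h
    exact ind_not_mem hdind (h ▸ Finset.mem_insert_self d S)
  · intro h
    have hd : d ∈ S' := h ▸ Finset.mem_insert_self d S
    rw [hS'eq, Finset.mem_insert] at hd
    rcases hd with h1 | h1
    · exact hcd.ne (h1.symm) -- c ⊂ d so c ≠ d
    · exact ind_not_mem hdind h1
  · intro σ hσ; exact ⟨σ, Finset.mem_insert_of_mem hσ, subset_rfl⟩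
  · intro σ hσ
    rcases Finset.mem_insert.1 hσ with h1 | h1
    · exact ⟨c, hcS', h1 ▸ hcd.subset⟩
    · exact ⟨σ, hsub h1, subset_rfl⟩
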